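/- With the notation of the augmented Lagrangian identity, if s_♭ and s_♯ are the smallest and largest eigenvalues of M^{-1/2} S M^{-1/2} where S = B A^{-1} B^T, then every eigenvalue μ of M^{-1} S_λ satisfies (λ + s_♭^{-1})^{-1} ≤ μ ≤ (λ + s_♯^{-1})^{-1}. -/

import Mathlib

open Matrix

section
open scoped ComplexOrder

/-- The positive semidefinite square root of a positive semidefinite matrix, as defined in
Mathlib (December 2024) under the name `Matrix.PosSemidef.sqrt` (since removed). -/
noncomputable def Matrix.PosSemidef.sqrt {n 𝕜 : Type*} [Fintype n] [DecidableEq n] [RCLike 𝕜]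
    {A : Matrix n n 𝕜} (hA : A.PosSemidef) : Matrix n n 𝕜 :=
  hA.1.eigenvectorUnitary.1 * diagonal ((↑) ∘ (√·) ∘ hA.1.eigenvalues) *
  (star hA.1.eigenvectorUnitary : Matrix n n 𝕜)

end

lemma aux_sqrt_mul_self {m : ℕ} (X : Matrix (Fin m) (Fin m) ℝ) (hX : X.PosSemidef) :
    hX.sqrt * hX.sqrt = X := by
  unfold Matrix.PosSemidef.sqrt
  have hU : (star hX.1.eigenvectorUnitary : Matrix (Fin m) (Fin m) ℝ) *
      hX.1.eigenvectorUnitary.1 = 1 :=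
    Unitary.star_mul_self_of_mem hX.1.eigenvectorUnitary.2
  conv_rhs => rw [hX.1.spectral_theorem, Unitary.conjStarAlgAut_apply]
  simp only [Matrix.mul_assoc]
  rw [← Matrix.mul_assoc (star _) _ (diagonal _ * _), hU, Matrix.one_mul,
    ← Matrix.mul_assoc (diagonal _) (diagonal _), diagonal_mul_diagonal]
  congr 3
  funext i
  simp [Real.mul_self_sqrt (hX.eigenvalues_nonneg i)]

/-- A nonnegative scalar multiple of a positive semidefinite matrix is positive semidefinite. -/
lemma aux_smul_posSemidef {k : ℕ} {X : Matrix (Fin k) (Fin k) ℝ} (hX : X.PosSemidef)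
    {l : ℝ} (hl : 0 ≤ l) : (l • X).PosSemidef := by
  exact hX.smul hl

/-- `B * A * Bᵀ` is positive definite when `A` is positive definite and `Bᵀ` is injective. -/
lemma aux_posDef_conj {m n : ℕ} {A : Matrix (Fin n) (Fin n) ℝ} (hA : A.PosDef)
    (B : Matrix (Fin m) (Fin n) ℝ) (hB : Function.Injective Bᵀ.mulVec) :
    (B * A * Bᵀ).PosDef := by
  simpa [conjTranspose_eq_transpose_of_trivial] using
    hA.conjTranspose_mul_mul_same (B := Bᵀ) hB

/-- If `B` has full row rank then `Bᵀ` acts injectively. -/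
lemma aux_inj {m n : ℕ} (B : Matrix (Fin m) (Fin n) ℝ) (hB : B.rank = m) :
    Function.Injective Bᵀ.mulVec := by
  have hrank : Bᵀ.rank = m := by rw [rank_transpose, hB]
  rw [Matrix.rank] at hrank
  have hrn := LinearMap.finrank_range_add_finrank_ker Bᵀ.mulVecLin
  rw [hrank] at hrn
  have hfin : Module.finrank ℝ (Fin m → ℝ) = m := by simp
  rw [hfin] at hrn
  have hker : LinearMap.ker Bᵀ.mulVecLin = ⊥ := by
    apply Submodule.finrank_eq_zero.mp
    omega
  have := LinearMap.ker_eq_bot.mp hker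
  simpa [Function.Injective, Matrix.mulVec_transpose] using this

/-- Conjugation by an invertible matrix preserves the spectrum. -/
lemma aux_spectrum_conj {k : ℕ} (U X : Matrix (Fin k) (Fin k) ℝ) (hU : IsUnit U) :
    spectrum ℝ (U * X * U⁻¹) = spectrum ℝ X := by
  obtain ⟨u, rfl⟩ := hU
  rw [← Matrix.coe_units_inv, spectrum.units_conjugate]

/-- Spectral bounds for the augmented Lagrangian Schur complement: if `s♭` and `s♯` are the
smallest and largest eigenvalues of `M^{-1/2} S M^{-1/2}` where `S = B A⁻¹ Bᵀ`, then every
eigenvalue `μ` of `M⁻¹ S_λ` (equivalently of `M^{-1/2} S_λ M^{-1/2}`) satisfies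
`(λ + s♭⁻¹)⁻¹ ≤ μ ≤ (λ + s♯⁻¹)⁻¹`. -/
theorem augmented_lagrangian_schur_spectrum {n m : ℕ}
    (A : Matrix (Fin n) (Fin n) ℝ) (B : Matrix (Fin m) (Fin n) ℝ)
    (M : Matrix (Fin m) (Fin m) ℝ)
    (hA : A.PosDef) (hB : B.rank = m) (hM : M.PosDef)
    (l : ℝ) (hl : 0 ≤ l)
    -- `W = M^{-1/2}`, the positive semidefinite square root of `M⁻¹`
    (W : Matrix (Fin m) (Fin m) ℝ) (hMinv : (M⁻¹).PosSemidef) (hW : W = hMinv.sqrt)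
    -- `S = B A⁻¹ Bᵀ`
    (S : Matrix (Fin m) (Fin m) ℝ) (hS : S = B * A⁻¹ * Bᵀ)
    -- `s♭`, `s♯` are the smallest and largest eigenvalues of `W * S * W`
    (hWSW : (W * S * W).IsHermitian)
    (sb ss : ℝ)
    (hsb_le : ∀ i, sb ≤ hWSW.eigenvalues i) (hsb_mem : ∃ i, hWSW.eigenvalues i = sb)
    (hss_le : ∀ i, hWSW.eigenvalues i ≤ ss) (hss_mem : ∃ i, hWSW.eigenvalues i = ss)
    (hsb_pos : 0 < sb)
    -- `S_λ = B A_λ⁻¹ Bᵀ`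
    (Sl : Matrix (Fin m) (Fin m) ℝ) (hSl : Sl = B * (A + l • (Bᵀ * M⁻¹ * B))⁻¹ * Bᵀ) :
    ∀ μ ∈ spectrum ℝ (M⁻¹ * Sl), (l + sb⁻¹)⁻¹ ≤ μ ∧ μ ≤ (l + ss⁻¹)⁻¹ := by
  -- basic positive-definiteness facts
  have hMinvPD : (M⁻¹).PosDef := hM.inv
  have hBtInj : Function.Injective Bᵀ.mulVec := aux_inj B hB
  have hSpd : S.PosDef := hS ▸ aux_posDef_conj hA.inv B hBtInj
  have hBMB : (Bᵀ * M⁻¹ * B).PosSemidef := by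
    have h := hMinvPD.posSemidef.conjTranspose_mul_mul_same B
    rwa [conjTranspose_eq_transpose_of_trivial] at h
  have hAl : (A + l • (Bᵀ * M⁻¹ * B)).PosDef :=
    hA.add_posSemidef (aux_smul_posSemidef hBMB hl)
  set Al := A + l • (Bᵀ * M⁻¹ * B) with hAldef
  set K := S⁻¹ + l • M⁻¹ with hKdef
  have hKpd : K.PosDef := hSpd.inv.add_posSemidef (aux_smul_posSemidef hMinvPD.posSemidef hl)
  have hAdet : IsUnit A.det := (isUnit_iff_isUnit_det A).mp hA.isUnit
  have hAldet : IsUnit Al.det := (isUnit_iff_isUnit_det Al).mp hAl.isUnit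
  have hSdet : IsUnit S.det := (isUnit_iff_isUnit_det S).mp hSpd.isUnit
  have hKdet : IsUnit K.det := (isUnit_iff_isUnit_det K).mp hKpd.isUnit
  -- Woodbury-type identity: Sl * K = 1, hence Sl = K⁻¹
  have key1 : Al * (A⁻¹ * Bᵀ) = Bᵀ * (1 + l • (M⁻¹ * S)) := by
    rw [hAldef, hS]
    rw [Matrix.add_mul, Matrix.mul_nonsing_inv_cancel_left _ _ hAdet]
    rw [Matrix.mul_add, Matrix.mul_one]
    congr 1
    rw [Matrix.smul_mul, Matrix.mul_smul]
    congr 1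
    simp only [Matrix.mul_assoc]
  have key2 : A⁻¹ * Bᵀ = Al⁻¹ * (Bᵀ * (1 + l • (M⁻¹ * S))) := by
    rw [← key1, Matrix.nonsing_inv_mul_cancel_left _ _ hAldet]
  have key3 : S = Sl * (1 + l • (M⁻¹ * S)) := by
    calc S = B * (A⁻¹ * Bᵀ) := by rw [hS, Matrix.mul_assoc]
    _ = B * (Al⁻¹ * (Bᵀ * (1 + l • (M⁻¹ * S)))) := by rw [key2]
    _ = Sl * (1 + l • (M⁻¹ * S)) := by rw [hSl]; simp only [Matrix.mul_assoc]
  have key4 : 1 + l • (M⁻¹ * S) = K * S := by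
    rw [hKdef, Matrix.add_mul, Matrix.nonsing_inv_mul _ hSdet, Matrix.smul_mul]
  have key5 : (Sl * K) * S = 1 * S := by
    rw [Matrix.one_mul, Matrix.mul_assoc, ← key4, ← key3]
  have hSlK : Sl * K = 1 := by
    calc Sl * K = (Sl * K) * (S * S⁻¹) := by
          rw [Matrix.mul_nonsing_inv _ hSdet, Matrix.mul_one]
    _ = (1 * S) * S⁻¹ := by rw [← Matrix.mul_assoc, key5]
    _ = 1 := by rw [Matrix.one_mul, Matrix.mul_nonsing_inv _ hSdet]
  have hSlinv : Sl = K⁻¹ := (Matrix.inv_eq_left_inv hSlK).symm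
  -- facts about W
  have hWW : W * W = M⁻¹ := by rw [hW]; exact aux_sqrt_mul_self _ hMinv
  have hWdet : IsUnit W.det := by
    have h : IsUnit (W.det * W.det) := by
      rw [← det_mul, hWW]
      exact (isUnit_iff_isUnit_det _).mp hMinvPD.isUnit
    exact isUnit_of_mul_isUnit_left h
  set T := W * S * W with hT
  have hTdet : IsUnit T.det := by
    rw [hT, det_mul, det_mul]
    exact (hWdet.mul hSdet).mul hWdet
  have hTunit : IsUnit T := (isUnit_iff_isUnit_det T).mpr hTdet
  have hTinv : T⁻¹ = W⁻¹ * (S⁻¹ * W⁻¹) := by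
    rw [hT, Matrix.mul_inv_rev, Matrix.mul_inv_rev]
  have hK' : T⁻¹ + l • 1 = W⁻¹ * K * W⁻¹ := by
    rw [hKdef, Matrix.mul_add, Matrix.add_mul, Matrix.mul_smul, Matrix.smul_mul]
    congr 1
    · rw [hTinv, Matrix.mul_assoc]
    · congr 1
      rw [← hWW, ← Matrix.mul_assoc, Matrix.nonsing_inv_mul _ hWdet, Matrix.one_mul,
        Matrix.mul_nonsing_inv _ hWdet]
  have hK'X : (T⁻¹ + l • 1) * (W * Sl * W) = 1 := by
    rw [hK', hSlinv]
    calc W⁻¹ * K * W⁻¹ * (W * K⁻¹ * W)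
        = W⁻¹ * (K * ((W⁻¹ * W) * (K⁻¹ * W))) := by simp only [Matrix.mul_assoc]
      _ = 1 := by
          rw [Matrix.nonsing_inv_mul _ hWdet, Matrix.one_mul,
            Matrix.mul_nonsing_inv_cancel_left _ _ hKdet,
            Matrix.nonsing_inv_mul _ hWdet]
  have hXinv : (T⁻¹ + l • 1)⁻¹ = W * Sl * W := Matrix.inv_eq_right_inv hK'X
  have hK'unit : IsUnit (T⁻¹ + l • (1 : Matrix (Fin m) (Fin m) ℝ)) := by
    apply (isUnit_iff_isUnit_det _).mpr
    have h := congrArg det hK'X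
    rw [det_mul, det_one] at h
    exact IsUnit.of_mul_eq_one _ h
  -- spectrum of M⁻¹ * Sl equals spectrum of W * Sl * W
  have hWunit : IsUnit W := (isUnit_iff_isUnit_det W).mpr hWdet
  have hconj : M⁻¹ * Sl = W * (W * Sl * W) * W⁻¹ := by
    rw [← hWW]
    calc W * W * Sl = W * (W * Sl) * (W * W⁻¹) := by
          rw [Matrix.mul_nonsing_inv _ hWdet, Matrix.mul_one, Matrix.mul_assoc]
      _ = W * (W * Sl * W) * W⁻¹ := by simp only [Matrix.mul_assoc]
  have hspec : spectrum ℝ (M⁻¹ * Sl) = spectrum ℝ (W * Sl * W) := by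
    rw [hconj, aux_spectrum_conj _ _ hWunit]
  -- `ss` is positive
  have hss_pos : 0 < ss := by
    obtain ⟨j, hj⟩ := hsb_mem
    exact lt_of_lt_of_le hsb_pos (hj ▸ hss_le j)
  -- main argument
  intro μ hμ
  rw [hspec] at hμ
  have hXcoe : W * Sl * W = ((hK'unit.unit⁻¹ : _ˣ) : Matrix (Fin m) (Fin m) ℝ) := by
    rw [Matrix.coe_units_inv, hK'unit.unit_spec, hXinv]
  rw [hXcoe] at hμ
  have hμ0 : μ ≠ 0 := spectrum.ne_zero_of_mem_of_unit hμ
  have hμinv : μ⁻¹ ∈ spectrum ℝ (T⁻¹ + l • (1 : Matrix (Fin m) (Fin m) ℝ)) := by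
    have h := (spectrum.inv_mem_iff (r := (Units.mk0 μ hμ0)⁻¹) (a := hK'unit.unit)).mpr
      (by simpa using hμ)
    simpa [hK'unit.unit_spec] using h
  set ν := μ⁻¹ - l with hνdef
  have hν : ν ∈ spectrum ℝ T⁻¹ := by
    have h : ν + l ∈ spectrum ℝ (algebraMap ℝ (Matrix (Fin m) (Fin m) ℝ) l + T⁻¹) := by
      rwa [hνdef, sub_add_cancel, Algebra.algebraMap_eq_smul_one, add_comm]
    exact spectrum.add_mem_add_iff.mp h
  have hTinvcoe : T⁻¹ = ((hTunit.unit⁻¹ : _ˣ) : Matrix (Fin m) (Fin m) ℝ) := by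
    rw [Matrix.coe_units_inv, hTunit.unit_spec]
  rw [hTinvcoe] at hν
  have hν0 : ν ≠ 0 := spectrum.ne_zero_of_mem_of_unit hν
  have hνinv : ν⁻¹ ∈ spectrum ℝ T := by
    have h := (spectrum.inv_mem_iff (r := (Units.mk0 ν hν0)⁻¹) (a := hTunit.unit)).mpr
      (by simpa using hν)
    simpa [hTunit.unit_spec] using h
  -- eigenvalue bounds
  have hrange : spectrum ℝ T = Set.range hWSW.eigenvalues :=
    hWSW.spectrum_real_eq_range_eigenvalues
  rw [hrange] at hνinv
  obtain ⟨i, hi⟩ := hνinv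
  have h1 : sb ≤ ν⁻¹ := hi ▸ hsb_le i
  have h2 : ν⁻¹ ≤ ss := hi ▸ hss_le i
  have hνinv_pos : 0 < ν⁻¹ := lt_of_lt_of_le hsb_pos h1
  have hν_pos : 0 < ν := inv_pos.mp hνinv_pos
  -- ss⁻¹ ≤ ν ≤ sb⁻¹
  have hν_le : ν ≤ sb⁻¹ := by
    rw [← inv_inv ν]
    exact inv_anti₀ hsb_pos h1
  have hν_ge : ss⁻¹ ≤ ν := by
    rw [← inv_inv ν]
    exact inv_anti₀ hνinv_pos h2
  -- conclude
  have hμinv_eq : μ⁻¹ = ν + l := by rw [hνdef, sub_add_cancel]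
  have hμinv_pos : 0 < μ⁻¹ := hμinv_eq ▸ add_pos_of_pos_of_nonneg hν_pos hl
  have hμ_pos : 0 < μ := inv_pos.mp hμinv_pos
  have hub : μ⁻¹ ≤ l + sb⁻¹ := by rw [hμinv_eq, add_comm]; exact add_le_add_right hν_le l
  have hlb : l + ss⁻¹ ≤ μ⁻¹ := by rw [hμinv_eq, add_comm]; exact add_le_add_left hν_ge l
  constructor
  · rw [← inv_inv μ]
    exact inv_anti₀ (lt_of_lt_of_le (by positivity) hlb) hub
  · rw [← inv_inv μ]
    exact inv_anti₀ (by positivity) hlb
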